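/- Let k ≥ 10 be an even integer, ℓ = (k-2)/2, let s ≥ 2 and n ≥ k be integers, and let t be an integer with 4 ≤ t ≤ ℓ. Define g_s(n,k,3) = 2·C(ℓ+1, s) - C(3, s) + ⌊(n-k+3)/2⌋·(C(5, s) - C(3, s)) + i·C(4, s), where i = 1 if n-k+3 is odd and i = 0 if n-k+3 is even. Then g_s(n,k,3) ≤ h_s(n,k,t) = C(k-t, s) + (n-k+t)·C(t, s-1). -/

import Mathlib

open SimpleGraph

variable {V : Type*}

/-- `x 1, …, x m` is a path in `G` (1-indexed): injective on `[1, m]`, with consecutive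
vertices adjacent. -/
def IsIndexedPath (G : SimpleGraph V) (x : ℕ → V) (m : ℕ) : Prop :=
  (∀ i j, 1 ≤ i → i ≤ m → 1 ≤ j → j ≤ m → x i = x j → i = j) ∧
  ∀ i, 1 ≤ i → i < m → G.Adj (x i) (x (i + 1))

/-- The vertex set of the indexed path `x 1, …, x m`. -/
def pathVerts (x : ℕ → V) (m : ℕ) : Set V := {v | ∃ i, 1 ≤ i ∧ i ≤ m ∧ x i = v}

/-- `N_P(v)`: the neighbours of `v` among the vertices of the path. -/
def pathNbrs (G : SimpleGraph V) (x : ℕ → V) (m : ℕ) (v : V) : Set V :=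
  {u | u ∈ pathVerts x m ∧ G.Adj v u}

/-- `N_P⁻(x₁)`: immediate predecessors on `P` of the path-neighbours of `x₁`. -/
def predNbrs (G : SimpleGraph V) (x : ℕ → V) (m : ℕ) : Set V :=
  {v | ∃ i, 2 ≤ i ∧ i ≤ m ∧ G.Adj (x 1) (x i) ∧ v = x (i - 1)}

/-- `N_P⁺(x_m)`: immediate successors on `P` of the path-neighbours of `x_m`. -/
def succNbrs (G : SimpleGraph V) (x : ℕ → V) (m : ℕ) : Set V :=
  {v | ∃ i, 1 ≤ i ∧ i < m ∧ G.Adj (x m) (x i) ∧ v = x (i + 1)}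

/-- `G` contains no cycle of length at least `k`, i.e. `c(G) < k`. -/
def NoCycleGE (G : SimpleGraph V) (k : ℕ) : Prop :=
  ∀ (v : V) (w : G.Walk v v), w.IsCycle → w.length < k

/-- `G` contains a cycle of length at least `L`. -/
def HasCycleGE (G : SimpleGraph V) (L : ℕ) : Prop :=
  ∃ (v : V) (w : G.Walk v v), w.IsCycle ∧ L ≤ w.length

/-- `G` is 2-connected: at least 3 vertices and deleting any single vertex leaves a
connected graph. -/
def TwoConnected (G : SimpleGraph V) [Fintype V] : Prop :=
  3 ≤ Fintype.card V ∧ ∀ v : V, (G.induce {u | u ≠ v}).Connected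

/-- The vertex set of the `α`-disintegration `H(G, α)` of `G`: the largest vertex set on
which the induced subgraph has minimum degree at least `α + 1`. -/
noncomputable def disint (G : SimpleGraph V) (α : ℕ) : Set V :=
  ⋃₀ {S : Set V | ∀ v ∈ S, α + 1 ≤ {u | u ∈ S ∧ G.Adj v u}.ncard}

/-- `N_s(G)`: the number of `s`-cliques of `G`. -/
noncomputable def cliqueCount (G : SimpleGraph V) (s : ℕ) : ℕ :=
  {S : Finset V | G.IsNClique s S}.ncard

/-- `h_s(n, k, a) = C(k - a, s) + (n - k + a) · C(a, s - 1)`. -/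
def hval (n k a s : ℕ) : ℕ :=
  Nat.choose (k - a) s + (n - k + a) * Nat.choose a (s - 1)

/-- The graph `H(n, k, a)` on `Fin n`: the first `a` vertices form the set `A`, the next
`k - 2a` vertices form `C`, and the remaining `n - k + a` vertices form `B`; `A ∪ C` is a
clique and every vertex of `A` is joined to every vertex of `B`. -/
def Hgraph (n k a : ℕ) : SimpleGraph (Fin n) :=
  SimpleGraph.fromRel fun i j =>
    (i.val < a ∧ k - a ≤ j.val) ∨ (i.val < k - a ∧ j.val < k - a)

/-- `G` is isomorphic to a subgraph of `H`. -/
def IsSubgraphOf {W : Type*} (G : SimpleGraph V) (H : SimpleGraph W) : Prop :=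
  ∃ f : V → W, Function.Injective f ∧ ∀ a b, G.Adj a b → H.Adj (f a) (f b)

/-- Every connected component of `H` is a star: there is an assignment of a "center" to
each vertex such that every edge joins the common center of its endpoints to a leaf. -/
def IsStarForest (H : SimpleGraph V) : Prop :=
  ∃ f : V → V, ∀ a b, H.Adj a b → (f a = a ∧ f b = a) ∨ (f a = b ∧ f b = b)

/-- `(i, j)` is a crossing pair of the indexed path `x 1, …, x m`. -/
def CrossPair (G : SimpleGraph V) (x : ℕ → V) (m i j : ℕ) : Prop :=
  1 ≤ i ∧ i < j ∧ j ≤ m ∧ G.Adj (x m) (x i) ∧ G.Adj (x 1) (x j)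

/-- `(i, j)` is a minimal crossing pair of the indexed path `x 1, …, x m`. -/
def MinCrossPair (G : SimpleGraph V) (x : ℕ → V) (m i j : ℕ) : Prop :=
  CrossPair G x m i j ∧
    ∀ h, i < h → h < j → ¬G.Adj (x 1) (x h) ∧ ¬G.Adj (x m) (x h)

/-- One application of the successor operation along the path to a set of vertices. -/
def succStep (x : ℕ → V) (m : ℕ) (S : Set V) : Set V :=
  {v | ∃ i, 1 ≤ i ∧ i < m ∧ x i ∈ S ∧ v = x (i + 1)}

/-- `N_P^{+i}(x_m)`: the `i`-fold iterated successor set of `N_P(x_m)` along the path. -/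
def iterNbrSucc (G : SimpleGraph V) (x : ℕ → V) (m i : ℕ) : Set V :=
  (succStep x m)^[i] (pathNbrs G x m (x m))

private lemma choose_low' (a s : ℕ) : ∀ n, a ≤ n →
    a.choose (s+1) + (n-a) * a.choose s ≤ n.choose (s+1) := by
  intro n h
  induction n, h using Nat.le_induction with
  | base => simp
  | succ n hn ih =>
    have hp : (n+1).choose (s+1) = n.choose s + n.choose (s+1) := Nat.choose_succ_succ n s
    have hmono : a.choose s ≤ n.choose s := Nat.choose_le_choose s hn
    have h2 : (n+1-a) * a.choose s = (n-a) * a.choose s + a.choose s := by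
      have he : (n+1-a) = (n-a)+1 := by omega
      rw [he, Nat.add_mul, one_mul]
    omega

private lemma choose_high' (a s : ℕ) : ∀ n, a ≤ n →
    n.choose (s+1) ≤ a.choose (s+1) + (n-a) * n.choose s := by
  intro n h
  induction n, h using Nat.le_induction with
  | base => simp
  | succ n hn ih =>
    have hp : (n+1).choose (s+1) = n.choose s + n.choose (s+1) := Nat.choose_succ_succ n s
    have hmono : n.choose s ≤ (n+1).choose s := Nat.choose_le_choose s (by omega)
    have h2 : (n+1-a) * (n+1).choose s = (n-a) * (n+1).choose s + (n+1).choose s := by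
      have he : (n+1-a) = (n-a)+1 := by omega
      rw [he, Nat.add_mul, one_mul]
    have h3 : (n-a) * n.choose s ≤ (n-a) * (n+1).choose s := Nat.mul_le_mul_left _ hmono
    omega

private lemma ratio2' (n p : ℕ) : 2 * n.choose (p+2) ≤ (n-1) * n.choose (p+1) := by
  have h1 : n.choose (p+2) * (p+2) = n.choose (p+1) * (n - (p+1)) :=
    Nat.choose_succ_right_eq n (p+1)
  calc 2 * n.choose (p+2) ≤ (p+2) * n.choose (p+2) := Nat.mul_le_mul_right _ (by omega)
    _ = n.choose (p+2) * (p+2) := Nat.mul_comm _ _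
    _ = n.choose (p+1) * (n-(p+1)) := h1
    _ ≤ n.choose (p+1) * (n-1) := Nat.mul_le_mul_left _ (by omega)
    _ = (n-1) * n.choose (p+1) := Nat.mul_comm _ _

private lemma core' (ℓ t p : ℕ) (hl : 4 ≤ ℓ) (ht1 : 4 ≤ t) (ht2 : t ≤ ℓ) :
    (ℓ+1).choose (p+2) ≤ (ℓ+1-t) * (ℓ+1).choose (p+1) + (t-3) * t.choose (p+1)
      + (if p ≤ 1 then 1 else 0) := by
  rcases Nat.lt_or_ge t 5 with ht5 | ht5
  · have ht4 : t = 4 := by omega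
    subst ht4
    rcases Nat.lt_or_ge ℓ 6 with hl6 | hl6
    · have hll : ℓ = 4 ∨ ℓ = 5 := by omega
      rcases hll with rfl | rfl
      · rcases Nat.lt_or_ge p 4 with hp4 | hp4
        · interval_cases p <;> decide
        · have h0 : (5).choose (p+2) = 0 := Nat.choose_eq_zero_of_lt (by omega)
          simp [h0]
      · rcases Nat.lt_or_ge p 5 with hp5 | hp5
        · interval_cases p <;> decide
        · have h0 : (6).choose (p+2) = 0 := Nat.choose_eq_zero_of_lt (by omega)
          simp [h0]
    · -- ℓ ≥ 6
      have h : 2 * (ℓ+1).choose (p+2) ≤ ℓ * (ℓ+1).choose (p+1) := ratio2' (ℓ+1) p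
      have hx : ℓ * (ℓ+1).choose (p+1) ≤ 2 * ((ℓ+1-4) * (ℓ+1).choose (p+1)) := by
        calc ℓ * (ℓ+1).choose (p+1) ≤ (2*(ℓ+1-4)) * (ℓ+1).choose (p+1) :=
              Nat.mul_le_mul_right _ (by omega)
          _ = 2 * ((ℓ+1-4) * (ℓ+1).choose (p+1)) := Nat.mul_assoc _ _ _
      omega
  · -- t ≥ 5
    have h1 : (ℓ+1).choose (p+2) ≤ t.choose (p+2) + (ℓ+1-t) * (ℓ+1).choose (p+1) :=
      choose_high' t (p+1) (ℓ+1) (by omega)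
    have h2 : 2 * t.choose (p+2) ≤ (t-1) * t.choose (p+1) := ratio2' t p
    have h3 : (t-1) * t.choose (p+1) ≤ 2 * ((t-3) * t.choose (p+1)) := by
      calc (t-1) * t.choose (p+1) ≤ (2*(t-3)) * t.choose (p+1) :=
            Nat.mul_le_mul_right _ (by omega)
        _ = 2 * ((t-3) * t.choose (p+1)) := Nat.mul_assoc _ _ _
    omega

private lemma master' (ℓ t p : ℕ) (hl : 4 ≤ ℓ) (ht1 : 4 ≤ t) (ht2 : t ≤ ℓ) :
    2 * (ℓ+1).choose (p+2) ≤ (2*ℓ+2-t).choose (p+2) + (t-3) * t.choose (p+1)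
      + (if p ≤ 1 then 1 else 0) := by
  have hA : (ℓ+1).choose (p+2) + (ℓ+1-t) * (ℓ+1).choose (p+1) ≤ (2*ℓ+2-t).choose (p+2) := by
    have h := choose_low' (ℓ+1) (p+1) (2*ℓ+2-t) (by omega)
    have he : 2*ℓ+2-t-(ℓ+1) = ℓ+1-t := by omega
    rw [he] at h
    exact h
  have hC := core' ℓ t p hl ht1 ht2
  omega

/-- The arithmetic claim `g_s(n,k,3) ≤ h_s(n,k,t)` from Lemma 4.1. -/
theorem stmt_15 (k ℓ s n t : ℕ) (hk : 10 ≤ k) (heven : Even k) (hℓ : ℓ = (k - 2) / 2)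
    (hs : 2 ≤ s) (hn : k ≤ n) (ht1 : 4 ≤ t) (ht2 : t ≤ ℓ) :
    2 * Nat.choose (ℓ + 1) s - Nat.choose 3 s
        + (n - k + 3) / 2 * (Nat.choose 5 s - Nat.choose 3 s)
        + (n - k + 3) % 2 * Nat.choose 4 s
      ≤ Nat.choose (k - t) s + (n - k + t) * Nat.choose t (s - 1) := by
  obtain ⟨c, hc⟩ := heven
  have hk2 : k = 2*ℓ + 2 := by omega
  have hl4 : 4 ≤ ℓ := by omega
  obtain ⟨p, rfl⟩ : ∃ p, s = p + 2 := ⟨s - 2, by omega⟩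
  have hkt : k - t = 2*ℓ+2-t := by omega
  have hidx : p + 2 - 1 = p + 1 := rfl
  rw [hkt, hidx]
  set m := n - k with hm
  set q := (m+3)/2 with hqdef
  set r := (m+3)%2 with hrdef
  have hM := master' ℓ t p hl4 ht1 ht2
  set e := (if p ≤ 1 then 1 else 0) with he
  have hc5 : Nat.choose 5 (p+2) = Nat.choose 4 (p+1) + Nat.choose 4 (p+2) :=
    Nat.choose_succ_succ 4 (p+1)
  have hc4 : Nat.choose 4 (p+2) = Nat.choose 3 (p+1) + Nat.choose 3 (p+2) :=
    Nat.choose_succ_succ 3 (p+1)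
  have hd4 : Nat.choose 4 (p+1) = Nat.choose 3 p + Nat.choose 3 (p+1) :=
    Nat.choose_succ_succ 3 p
  have h4T : Nat.choose 4 (p+1) ≤ Nat.choose t (p+1) := Nat.choose_le_choose _ ht1
  have hc3a : Nat.choose 3 (p+2) ≤ Nat.choose (ℓ+1) (p+2) := Nat.choose_le_choose _ (by omega)
  have he1 : e ≤ Nat.choose 3 (p+2) := by
    by_cases hp : p ≤ 1
    · simp [he, hp]; exact Nat.choose_pos (show p+2 ≤ 3 by omega)
    · simp [he, hp]
  have he2 : e ≤ Nat.choose 3 p := by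
    by_cases hp : p ≤ 1
    · simp [he, hp]; exact Nat.choose_pos (show p ≤ 3 by omega)
    · simp [he, hp]
  have key1 : q * (Nat.choose 5 (p+2) - Nat.choose 3 (p+2)) ≤ 2*(q * Nat.choose t (p+1)) := by
    have h34 : Nat.choose 3 (p+1) ≤ Nat.choose 4 (p+1) := Nat.choose_le_choose _ (by omega)
    have hle : Nat.choose 5 (p+2) - Nat.choose 3 (p+2) ≤ 2 * Nat.choose t (p+1) := by omega
    calc q * (Nat.choose 5 (p+2) - Nat.choose 3 (p+2))
        ≤ q * (2 * Nat.choose t (p+1)) := Nat.mul_le_mul_left _ hle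
      _ = 2*(q * Nat.choose t (p+1)) := by ring
  have key2 : (m+t) * Nat.choose t (p+1)
      = 2*(q * Nat.choose t (p+1)) + r * Nat.choose t (p+1) + (t-3) * Nat.choose t (p+1) := by
    have hmt : m + t = 2*q + r + (t-3) := by omega
    rw [hmt]; ring
  have hr01 : r = 0 ∨ r = 1 := by omega
  rcases hr01 with hr | hr <;> rw [hr] at key2 ⊢ <;> omega
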